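/- Let R be a group of operators for a finite group G such that every inner automorphism of G lies in the image of R in Aut G (Inn G ≤ Aut_R G). Then the absolute R-hypercenter L_∞(G, R) is a nilpotent normal subgroup of G. -/

import Mathlib

/-- The commutator `[x, r] = x⁻¹ · x^r` for an operator group acting via `φ : R →* Aut G`. -/
def opComm {R G : Type*} [Group R] [Group G] (φ : R →* MulAut G) (x : G) (r : R) : G :=
  x⁻¹ * φ r x

/-- `opL φ n = Lₙ(G, R)`: elements `x` with `[x, r₁, …, rₙ] = 1` for all `r₁, …, rₙ ∈ R`. -/
def opL {R G : Type*} [Group R] [Group G] (φ : R →* MulAut G) (n : ℕ) : Set G :=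
  {x | ∀ l : List R, l.length = n → l.foldl (opComm φ) x = 1}

open SemidirectProduct

lemma mem_ucs_succ_iff' {K : Type*} [Group K] {n : ℕ} {x : K} :
    x ∈ Subgroup.upperCentralSeries K (n + 1) ↔
      ∀ u : K, x⁻¹ * u⁻¹ * x * u ∈ Subgroup.upperCentralSeries K n := by
  simp only [mem_upperCentralSeries_succ_iff, commutatorElement_def]
  constructor
  · intro h u
    have h1 := h (x⁻¹ * u⁻¹ * x)
    have : x * (x⁻¹ * u⁻¹ * x) * x⁻¹ * (x⁻¹ * u⁻¹ * x)⁻¹ = (x⁻¹ * u⁻¹ * x * u)⁻¹ := by group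
    rw [this] at h1
    exact (inv_mem_iff).mp h1
  · intro h y
    have h1 := h (x * y⁻¹ * x⁻¹)
    have : x⁻¹ * (x * y⁻¹ * x⁻¹)⁻¹ * x * (x * y⁻¹ * x⁻¹) = (x * y * x⁻¹ * y⁻¹)⁻¹ := by group
    rw [this] at h1
    exact (inv_mem_iff).mp h1

lemma mem_opL_succ_iff {R G : Type*} [Group R] [Group G] (φ : R →* MulAut G) {n : ℕ} {x : G} :
    x ∈ opL φ (n + 1) ↔ ∀ r : R, opComm φ x r ∈ opL φ n := by
  constructor
  · intro h r l hl
    exact h (r :: l) (by simp [hl])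
  · intro h l hl
    match l, hl with
    | r :: l, hl => exact h r l (by simpa using hl)

/-- Let `R` be a group of operators for a finite group `G` (acting via `φ : R →* Aut G`) such
that every inner automorphism of `G` lies in `φ(R)`. Then the absolute `R`-hypercenter
`L_∞(G, R) = ⋃ₙ Lₙ(G, R)` is a nilpotent normal subgroup of `G`. -/
theorem opHypercenter_nilpotent_normal (R G : Type*) [Group R] [Group G] [Finite R] [Finite G]
    (φ : R →* MulAut G) (hInn : ∀ g : G, MulAut.conj g ∈ φ.range) :
    ∃ H : Subgroup G, H.Normal ∧ Group.IsNilpotent H ∧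
      (H : Set G) = ⋃ n : ℕ, opL φ n := by
  haveI : Finite (G ⋊[φ] R) := by
    exact Finite.of_injective (fun x : G ⋊[φ] R => (x.left, x.right))
      fun a b h => SemidirectProduct.ext (congrArg Prod.fst h) (congrArg Prod.snd h)
  -- key lemma A
  have keyA : ∀ u : G ⋊[φ] R, ∃ r : R, ∀ y : G,
      (inl y)⁻¹ * u⁻¹ * inl y * u = inl (opComm φ y r) := by
    intro u
    obtain ⟨s, hs⟩ := hInn u.left
    refine ⟨u.right⁻¹ * s⁻¹, fun y => ?_⟩
    have hsy : (φ s)⁻¹ y = u.left⁻¹ * y * u.left := by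
      rw [hs, MulAut.conj_inv_apply]
    ext
    · simp [opComm, map_mul, map_inv, MulAut.mul_apply, MulAut.one_apply, hsy, mul_assoc]
    · simp
  -- commutator with inr r⁻¹ realizes opComm r
  have keyR : ∀ (r : R) (y : G),
      (inl y)⁻¹ * (inr r⁻¹ : G ⋊[φ] R)⁻¹ * inl y * inr r⁻¹ = inl (opComm φ y r) := by
    intro r y
    ext <;> simp [opComm]
  -- Lemma B
  have lemB : ∀ (n : ℕ) (x : G), x ∈ opL φ n →
      (inl x : G ⋊[φ] R) ∈ Subgroup.upperCentralSeries (G ⋊[φ] R) n := by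
    intro n
    induction n with
    | zero =>
      intro x hx
      have : x = 1 := hx [] rfl
      rw [this, map_one]
      exact one_mem _
    | succ n ih =>
      intro x hx
      rw [mem_ucs_succ_iff']
      intro u
      obtain ⟨r, hr⟩ := keyA u
      rw [hr x]
      exact ih _ ((mem_opL_succ_iff φ).mp hx r)
  -- Lemma C
  have lemC : ∀ (n : ℕ) (x : G),
      (inl x : G ⋊[φ] R) ∈ Subgroup.upperCentralSeries (G ⋊[φ] R) n → x ∈ opL φ n := by
    intro n
    induction n with
    | zero =>
      intro x hx
      have : (inl x : G ⋊[φ] R) = 1 := by simpa [upperCentralSeries] using hx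
      have hx1 : x = 1 := inl_injective (by simpa using this)
      intro l hl
      rw [List.length_eq_zero_iff] at hl
      simp [hl, hx1]
    | succ n ih =>
      intro x hx
      rw [mem_ucs_succ_iff'] at hx
      rw [mem_opL_succ_iff]
      intro r
      apply ih
      rw [← keyR r x]
      exact hx (inr r⁻¹)
  -- stabilization
  set c : ℕ → ℕ := fun n => Nat.card (Subgroup.upperCentralSeries (G ⋊[φ] R) n) with hc
  have hbdd : BddAbove (Set.range c) := by
    refine ⟨Nat.card (G ⋊[φ] R), ?_⟩
    rintro _ ⟨n, rfl⟩
    exact Nat.card_le_card_of_injective _ Subtype.val_injective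
  obtain ⟨N, hN⟩ := Nat.sSup_mem (Set.range_nonempty c) hbdd
  have hstab : ∀ m, N ≤ m →
      Subgroup.upperCentralSeries (G ⋊[φ] R) m = Subgroup.upperCentralSeries (G ⋊[φ] R) N := by
    intro m hm
    exact (Subgroup.eq_of_le_of_card_ge (upperCentralSeries_mono _ hm)
      (show c m ≤ c N from hN ▸ le_csSup hbdd ⟨m, rfl⟩)).symm
  refine ⟨(Subgroup.upperCentralSeries (G ⋊[φ] R) N).comap (inl : G →* G ⋊[φ] R),
    (inferInstance : (Subgroup.upperCentralSeries (G ⋊[φ] R) N).Normal).comap _, ?_, ?_⟩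
  · -- nilpotent
    rw [nilpotent_iff_finite_ascending_central_series]
    refine ⟨N, fun i => ((Subgroup.upperCentralSeries (G ⋊[φ] R) i).comap
      (inl : G →* G ⋊[φ] R)).subgroupOf _, ⟨?_, ?_⟩, ?_⟩
    · have h0 : ((Subgroup.upperCentralSeries (G ⋊[φ] R) 0).comap (inl : G →* G ⋊[φ] R)) = ⊥ := by
        rw [upperCentralSeries_zero, MonoidHom.comap_bot, MonoidHom.ker_eq_bot_iff]
        exact inl_injective
      show ((Subgroup.upperCentralSeries (G ⋊[φ] R) 0).comap (inl : G →* G ⋊[φ] R)).subgroupOf _ = ⊥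
      rw [h0, Subgroup.bot_subgroupOf]
    · rintro ⟨x, hxH⟩ n hx ⟨g, hgH⟩
      simp only [Subgroup.mem_subgroupOf, Subgroup.mem_comap] at hx ⊢
      simp only [commutatorElement_def, Subgroup.coe_mul, Subgroup.coe_inv, map_mul, map_inv]
      exact mem_upperCentralSeries_succ_iff.mp hx (inl g)
    · show ((Subgroup.upperCentralSeries (G ⋊[φ] R) N).comap (inl : G →* G ⋊[φ] R)).subgroupOf _ = ⊤
      exact Subgroup.subgroupOf_self _
  · -- set equality
    ext x
    simp only [SetLike.mem_coe, Subgroup.mem_comap, Set.mem_iUnion]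
    constructor
    · intro hx
      exact ⟨N, lemC N x hx⟩
    · rintro ⟨n, hn⟩
      have h1 := lemB n x hn
      have h2 : Subgroup.upperCentralSeries (G ⋊[φ] R) n ≤ Subgroup.upperCentralSeries (G ⋊[φ] R) N := by
        rcases le_total n N with h | h
        · exact upperCentralSeries_mono _ h
        · exact le_of_eq (hstab n h)
      exact h2 h1
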